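/- Let X be a Banach space and f a proper closed convex function on X with S = {x : f(x) ≤ 0} ≠ ∅. Let K_f be the infimum of constants K such that d(x, S) ≤ K·(f(x))⁺ for all x ∈ X. Then K_f⁻¹ = inf{ d(0, ∂f(x)) : x ∉ S }, where ∂f is the convex subdifferential. -/

import Mathlib

open EMetric ENNReal

/-- The positive part `a⁺` of an extended real, as an extended nonnegative real. -/
noncomputable def erealPos (a : EReal) : ℝ≥0∞ :=
  if a = ⊤ then ⊤ else ENNReal.ofReal a.toReal

/-- The error bound constant `K_f`: the infimum of `K` such that
`d(x, [f ≤ 0]) ≤ K (f x)⁺` for all `x`. -/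
noncomputable def errK {X : Type*} [MetricSpace X] (f : X → EReal) : ℝ≥0∞ :=
  sInf {K : ℝ≥0∞ | ∀ x : X, infEdist x {u : X | f u ≤ 0} ≤ K * erealPos (f x)}

/-- The subdifferential of convex analysis:
`∂f(x) = {x* : f y ≥ f x + ⟨x*, y − x⟩ for all y}`. -/
def convexSubdiff {X : Type*} [NormedAddCommGroup X] [NormedSpace ℝ X]
    (f : X → EReal) (x : X) : Set (X →L[ℝ] ℝ) :=
  {g | ∀ y : X, (g (y - x) : EReal) + f x ≤ f y}

open Filter Topology

lemma erealPos_top_iff (a : EReal) : erealPos a = ⊤ ↔ a = ⊤ := by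
  constructor
  · intro h
    by_contra hne
    rw [erealPos, if_neg hne] at h
    exact ENNReal.ofReal_ne_top h
  · intro h; rw [erealPos, if_pos h]

lemma erealPos_coe (a : EReal) (ha : a ≠ ⊥) : ((erealPos a : ℝ≥0∞) : EReal) = max a 0 := by
  rcases eq_or_ne a ⊤ with rfl | hat
  · simp [erealPos]
  · rw [erealPos, if_neg hat, EReal.coe_ennreal_ofReal]
    have h1 : (((a.toReal ⊔ 0 : ℝ)) : EReal) = ((a.toReal : ℝ) : EReal) ⊔ ((0:ℝ) : EReal) := by
      rcases le_total a.toReal 0 with h | h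
      · rw [sup_eq_right.2 h, sup_eq_right.2 (EReal.coe_le_coe_iff.2 h)]
      · rw [sup_eq_left.2 h, sup_eq_left.2 (EReal.coe_le_coe_iff.2 h)]
    rw [h1, EReal.coe_toReal hat ha]
    rfl

lemma erealPos_of_nonpos {a : EReal} (ha : a ≤ 0) : erealPos a = 0 := by
  rw [erealPos, if_neg (by rintro rfl; exact absurd ha (by simp)), ENNReal.ofReal_eq_zero]
  induction a with
  | bot => simp
  | coe r => exact_mod_cast ha
  | top => simp at ha

lemma erealPos_lsc {X : Type*} [TopologicalSpace X] {f : X → EReal}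
    (hbot : ∀ x, f x ≠ ⊥) (hlsc : LowerSemicontinuous f) :
    LowerSemicontinuous fun x => erealPos (f x) := by
  intro x c hc
  obtain ⟨c', hcc', hc'⟩ := exists_between hc
  have hc't : c' ≠ ⊤ := (lt_of_lt_of_le hc' le_top).ne
  set μ : ℝ := c'.toReal with hμ
  have hμc' : ENNReal.ofReal μ = c' := ENNReal.ofReal_toReal hc't
  have hmlt : ((μ : ℝ) : EReal) < f x := by
    rcases eq_or_ne (f x) ⊤ with hfx | hfx
    · rw [hfx]; exact EReal.coe_lt_top μ
    · simp only [erealPos, if_neg hfx] at hc'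
      have hpos : 0 < (f x).toReal := by
        by_contra hneg
        push_neg at hneg
        rw [ENNReal.ofReal_of_nonpos hneg] at hc'
        exact (not_lt.2 (zero_le : 0 ≤ c')) hc'
      have : μ < (f x).toReal := by
        have := ENNReal.toReal_lt_toReal hc't ENNReal.ofReal_ne_top |>.2 hc'
        rwa [ENNReal.toReal_ofReal hpos.le] at this
      calc ((μ : ℝ) : EReal) < (((f x).toReal : ℝ) : EReal) := EReal.coe_lt_coe_iff.2 this
        _ = f x := EReal.coe_toReal hfx (hbot x)
  refine (hlsc x _ hmlt).mono fun y hy => ?_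
  refine lt_of_lt_of_le hcc' ?_
  rcases eq_or_ne (f y) ⊤ with hfy | hfy
  · simp only [erealPos, if_pos hfy]; exact le_top
  · simp only [erealPos, if_neg hfy]
    rw [← hμc']
    refine ENNReal.ofReal_le_ofReal ?_
    have := EReal.toReal_le_toReal hy.le (EReal.coe_ne_bot μ) hfy
    simpa using this

lemma my_ekeland {X : Type*} [MetricSpace X] [CompleteSpace X]
    (F : X → ℝ≥0∞) (hF : LowerSemicontinuous F) (x0 : X) (h0 : F x0 ≠ ⊤)
    (δ : ℝ≥0∞) (hδ0 : δ ≠ 0) (hδt : δ ≠ ⊤) :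
    ∃ z, F z ≤ F x0 ∧ δ * edist z x0 ≤ F x0 ∧ ∀ w, F z ≤ F w + δ * edist w z := by
  classical
  set R : X → X → Prop := fun y x => F y + δ * edist y x ≤ F x with hRdef
  have Rrefl : ∀ x, R x x := fun x => by simp [R]
  have Rle : ∀ {y x}, R y x → F y ≤ F x := fun h => le_trans le_self_add h
  have Rtrans : ∀ {a b c}, R a b → R b c → R a c := by
    intro a b c hab hbc
    have h1 : F a + δ * edist a b + δ * edist b c ≤ F c := by
      calc F a + δ * edist a b + δ * edist b c ≤ F b + δ * edist b c :=
            add_le_add_left hab _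
        _ ≤ F c := hbc
    refine le_trans ?_ h1
    rw [add_assoc, ← mul_add]
    exact add_le_add_right (mul_le_mul_right (edist_triangle a b c) δ) _
  have hpow : ∀ n : ℕ, (2⁻¹ : ℝ≥0∞) ^ n ≠ 0 :=
    fun n => pow_ne_zero n (ENNReal.inv_ne_zero.2 (by norm_num))
  have step : ∀ (n : ℕ) (x : X), F x ≠ ⊤ →
      ∃ y, R y x ∧ ∀ w, R w x → F y ≤ F w + 2⁻¹ ^ n := by
    intro n x hx
    set I : ℝ≥0∞ := ⨅ w ∈ {w | R w x}, F w with hI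
    have hIle : I ≤ F x := biInf_le F (Rrefl x)
    have hIlt : I < I + 2⁻¹ ^ n :=
      ENNReal.lt_add_right (lt_of_le_of_lt hIle (lt_top_iff_ne_top.2 hx)).ne (hpow n)
    have hex : ∃ y ∈ {w | R w x}, F y < I + 2⁻¹ ^ n := by
      by_contra h
      push_neg at h
      exact absurd (lt_of_lt_of_le hIlt (le_iInf₂ h)) (lt_irrefl _)
    obtain ⟨y, hy, hylt⟩ := hex
    exact ⟨y, hy, fun w hw => le_trans hylt.le (add_le_add_left (biInf_le F hw) _)⟩
  choose! next h1 h2 using step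
  let seq : ℕ → X := fun n => Nat.rec x0 (fun n xn => next n xn) n
  have hseqsucc : ∀ n, seq (n + 1) = next n (seq n) := fun n => rfl
  have key : ∀ n, F (seq n) ≤ F x0 ∧ R (seq (n + 1)) (seq n) := by
    intro n
    induction n with
    | zero => exact ⟨le_rfl, h1 0 x0 h0⟩
    | succ n ih =>
      have hle : F (seq (n + 1)) ≤ F x0 := le_trans (Rle ih.2) ih.1
      exact ⟨hle, h1 (n + 1) (seq (n + 1)) (lt_of_le_of_lt hle (lt_top_iff_ne_top.2 h0)).ne⟩
  have hne : ∀ n, F (seq n) ≠ ⊤ :=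
    fun n => (lt_of_le_of_lt (key n).1 (lt_top_iff_ne_top.2 h0)).ne
  have hRle' : ∀ n m, n ≤ m → R (seq m) (seq n) := by
    intro n m hnm
    induction m, hnm using Nat.le_induction with
    | base => exact Rrefl _
    | succ m hm ih => exact Rtrans (key m).2 ih
  have hsum : ∀ N : ℕ, F (seq N) + δ * ∑ n ∈ Finset.range N, edist (seq (n + 1)) (seq n) ≤ F x0 := by
    intro N
    induction N with
    | zero => rw [Finset.range_zero, Finset.sum_empty, mul_zero, add_zero]; exact le_rfl
    | succ N ih =>
      rw [Finset.sum_range_succ, mul_add]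
      calc F (seq (N + 1)) + (δ * ∑ n ∈ Finset.range N, edist (seq (n + 1)) (seq n)
              + δ * edist (seq (N + 1)) (seq N))
          = (F (seq (N + 1)) + δ * edist (seq (N + 1)) (seq N))
              + δ * ∑ n ∈ Finset.range N, edist (seq (n + 1)) (seq n) := by ring
        _ ≤ F (seq N) + δ * ∑ n ∈ Finset.range N, edist (seq (n + 1)) (seq n) :=
            add_le_add_left (key N).2 _
        _ ≤ F x0 := ih
  have htsum : ∑' n, edist (seq (n + 1)) (seq n) ≠ ⊤ := by
    have hmul : δ * ∑' n, edist (seq (n + 1)) (seq n) ≤ F x0 := by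
      rw [ENNReal.tsum_eq_iSup_sum, ENNReal.mul_iSup]
      refine iSup_le fun s => ?_
      obtain ⟨N, hN⟩ := s.exists_nat_subset_range
      calc δ * ∑ n ∈ s, edist (seq (n + 1)) (seq n)
          ≤ δ * ∑ n ∈ Finset.range N, edist (seq (n + 1)) (seq n) :=
            mul_le_mul_right (Finset.sum_le_sum_of_subset hN) δ
        _ ≤ F x0 := le_trans le_add_self (hsum N)
    have hmul' : (∑' n, edist (seq (n + 1)) (seq n)) * δ ≤ F x0 := by
      rwa [mul_comm] at hmul
    have := (ENNReal.le_div_iff_mul_le (Or.inl hδ0) (Or.inl hδt)).2 hmul'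
    exact (lt_of_le_of_lt this (ENNReal.div_lt_top h0 hδ0)).ne
  have hcauchy : CauchySeq seq := by
    refine cauchySeq_of_edist_le_of_tsum_ne_top (fun n => edist (seq (n + 1)) (seq n))
      (fun n => by rw [edist_comm]) htsum
  obtain ⟨z, hz⟩ := cauchySeq_tendsto_of_complete hcauchy
  have hRz : ∀ n, R z (seq n) := by
    intro n
    by_contra hcon
    have hG : LowerSemicontinuous fun y => F y + δ * edist y (seq n) :=
      hF.add (((ENNReal.continuous_const_mul hδt).comp
        (continuous_id.edist continuous_const)).lowerSemicontinuous)
    have hlt : F (seq n) < F z + δ * edist z (seq n) := lt_of_not_ge hcon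
    have hev := (hz.eventually (hG z _ hlt)).and (eventually_ge_atTop n)
    obtain ⟨m, hm1, hm2⟩ := hev.exists
    exact absurd (lt_of_lt_of_le hm1 (hRle' n m hm2)) (lt_irrefl _)
  refine ⟨z, Rle (hRz 0), le_trans le_add_self (hRz 0), ?_⟩
  intro w
  by_contra hcon
  have hwz : R w z := (lt_of_not_ge hcon).le
  have hw : ∀ n : ℕ, F z ≤ F w + 2⁻¹ ^ n := fun n =>
    le_trans (Rle (hRz (n + 1)))
      (by rw [hseqsucc]; exact h2 n (seq n) (hne n) w (Rtrans hwz (hRz n)))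
  have hFw : F w ≠ ⊤ := by
    intro h
    exact absurd (lt_of_not_ge hcon) (by simp [h])
  have hzw : F z ≤ F w := by
    refine ENNReal.le_of_forall_pos_le_add fun ε hε _ => ?_
    obtain ⟨n, hn⟩ := ENNReal.exists_inv_two_pow_lt (by exact_mod_cast hε.ne' : (ε : ℝ≥0∞) ≠ 0)
    exact le_trans (hw n) (add_le_add_right (le_of_lt (by simpa using hn)) _)
  exact absurd (lt_of_lt_of_le (lt_of_not_ge hcon) (le_trans hzw le_self_add)) (lt_irrefl _)

lemma my_sandwich {X : Type*} [NormedAddCommGroup X] [NormedSpace ℝ X]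
    (h : X → EReal) (σ : ℝ) (hσ : 0 < σ)
    (h0 : h 0 = 0)
    (hlow : ∀ w, ((-(σ * ‖w‖) : ℝ) : EReal) ≤ h w)
    (hconv : ∀ w1 w2 : X, ∀ t : ℝ, 0 ≤ t → t ≤ 1 →
      h (t • w1 + (1 - t) • w2) ≤ (t : EReal) * h w1 + ((1 - t : ℝ) : EReal) * h w2) :
    ∃ g : X →L[ℝ] ℝ, ‖g‖ ≤ σ ∧ ∀ w, ((g w : ℝ) : EReal) ≤ h w := by
  classical
  have hbot : ∀ w, h w ≠ ⊥ := fun w hw =>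
    EReal.coe_ne_bot _ (le_bot_iff.1 (hw ▸ hlow w))
  have htr : ∀ w, h w ≠ ⊤ → -(σ * ‖w‖) ≤ (h w).toReal := by
    intro w hw
    have := EReal.toReal_le_toReal (hlow w) (EReal.coe_ne_bot _) hw
    rwa [EReal.toReal_coe] at this
  set A : X → Set ℝ := fun y => {r | ∃ v, h v ≠ ⊤ ∧ r = (h v).toReal + σ * ‖y - v‖}
    with hA
  have hAne : ∀ y, (A y).Nonempty := by
    intro y
    exact ⟨σ * ‖y‖, 0, by simp [h0], by simp [h0]⟩
  have hAbdd : ∀ y, ∀ r ∈ A y, -(σ * ‖y‖) ≤ r := by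
    rintro y r ⟨v, hv, rfl⟩
    have h1 : -(σ * ‖v‖) ≤ (h v).toReal := htr v hv
    have h2 : ‖v‖ - ‖y‖ ≤ ‖y - v‖ := by
      have := norm_sub_norm_le v y
      rwa [norm_sub_rev v y] at this
    nlinarith [norm_nonneg y, norm_nonneg v, norm_nonneg (y - v)]
  have hAbdd' : ∀ y, BddBelow (A y) := fun y => ⟨_, hAbdd y⟩
  set m : X → ℝ := fun y => sInf (A y) with hm
  have hm_le : ∀ y v, h v ≠ ⊤ → m y ≤ (h v).toReal + σ * ‖y - v‖ :=
    fun y v hv => csInf_le (hAbdd' y) ⟨v, hv, rfl⟩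
  have hm_ge : ∀ y, -(σ * ‖y‖) ≤ m y := fun y => le_csInf (hAne y) (hAbdd y)
  have hm0 : m 0 = 0 := by
    refine le_antisymm ?_ (by simpa using hm_ge 0)
    simpa [h0] using hm_le 0 0 (by simp [h0])
  have hm_ub : ∀ y, m y ≤ σ * ‖y‖ := by
    intro y; simpa [h0] using hm_le y 0 (by simp [h0])
  -- convexity of m
  have hmconv : ∀ y1 y2 : X, ∀ t : ℝ, 0 ≤ t → t ≤ 1 →
      m (t • y1 + (1 - t) • y2) ≤ t * m y1 + (1 - t) * m y2 := by
    intro y1 y2 t ht0 ht1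
    rcases eq_or_lt_of_le ht0 with rfl | ht0'
    · simp
    rcases eq_or_lt_of_le ht1 with rfl | ht1'
    · simp
    refine le_of_forall_pos_le_add fun ε hε => ?_
    obtain ⟨r1, ⟨v1, hv1, rfl⟩, hr1⟩ :=
      exists_lt_of_csInf_lt (hAne y1) (lt_add_of_pos_right (m y1) (by positivity : (0:ℝ) < ε/2))
    obtain ⟨r2, ⟨v2, hv2, rfl⟩, hr2⟩ :=
      exists_lt_of_csInf_lt (hAne y2) (lt_add_of_pos_right (m y2) (by positivity : (0:ℝ) < ε/2))
    set v := t • v1 + (1 - t) • v2 with hvdef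
    have hcv : h v ≤ ((t * (h v1).toReal + (1 - t) * (h v2).toReal : ℝ) : EReal) := by
      have := hconv v1 v2 t ht0 ht1
      rw [show h v1 = (((h v1).toReal : ℝ) : EReal) from (EReal.coe_toReal hv1 (hbot v1)).symm,
        show h v2 = (((h v2).toReal : ℝ) : EReal) from (EReal.coe_toReal hv2 (hbot v2)).symm] at this
      refine le_trans this (le_of_eq ?_)
      norm_cast
    have hvt : h v ≠ ⊤ := fun hvt => EReal.coe_ne_top _ (top_le_iff.1 (hvt ▸ hcv))
    have hcvr : (h v).toReal ≤ t * (h v1).toReal + (1 - t) * (h v2).toReal := by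
      have := EReal.toReal_le_toReal hcv (hbot v) (EReal.coe_ne_top _)
      rwa [EReal.toReal_coe] at this
    have hnorm : ‖(t • y1 + (1 - t) • y2) - v‖ ≤ t * ‖y1 - v1‖ + (1 - t) * ‖y2 - v2‖ := by
      have heq : (t • y1 + (1 - t) • y2) - v = t • (y1 - v1) + (1 - t) • (y2 - v2) := by
        rw [hvdef]; module
      rw [heq]
      refine le_trans (norm_add_le _ _) ?_
      rw [norm_smul, norm_smul, Real.norm_eq_abs, Real.norm_eq_abs,
        abs_of_nonneg ht0, abs_of_nonneg (by linarith : (0:ℝ) ≤ 1 - t)]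
    have := hm_le (t • y1 + (1 - t) • y2) v hvt
    have hfin : (h v).toReal + σ * ‖(t • y1 + (1 - t) • y2) - v‖ ≤
        t * ((h v1).toReal + σ * ‖y1 - v1‖) + (1 - t) * ((h v2).toReal + σ * ‖y2 - v2‖) := by
      nlinarith [norm_nonneg ((t • y1 + (1 - t) • y2) - v)]
    nlinarith
  -- the sublinear functional N
  set B : X → Set ℝ := fun w => {r | ∃ t : ℝ, 0 < t ∧ r = m (t • w) / t} with hB
  have hBne : ∀ w, (B w).Nonempty := fun w => ⟨m w / 1, 1, one_pos, by simp⟩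
  have hBbdd : ∀ w, ∀ r ∈ B w, -(σ * ‖w‖) ≤ r := by
    rintro w r ⟨t, ht, rfl⟩
    rw [le_div_iff₀ ht]
    have := hm_ge (t • w)
    rw [norm_smul, Real.norm_eq_abs, abs_of_pos ht] at this
    nlinarith
  have hBbdd' : ∀ w, BddBelow (B w) := fun w => ⟨_, hBbdd w⟩
  set N : X → ℝ := fun w => sInf (B w) with hN
  have hN_mem : ∀ w, ∀ t : ℝ, 0 < t → N w ≤ m (t • w) / t :=
    fun w t ht => csInf_le (hBbdd' w) ⟨t, ht, rfl⟩
  have hN_le_m : ∀ w, N w ≤ m w := fun w => by simpa using hN_mem w 1 one_pos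
  have hmono : ∀ (w : X) (s t : ℝ), 0 < s → s ≤ t → m (s • w) / s ≤ m (t • w) / t := by
    intro w s t hs hst
    have ht : 0 < t := lt_of_lt_of_le hs hst
    have hc1 : s / t ≤ 1 := (div_le_one ht).2 hst
    have hc0 : 0 ≤ s / t := le_of_lt (div_pos hs ht)
    have := hmconv (t • w) 0 (s / t) hc0 hc1
    rw [smul_zero, add_zero, smul_smul, div_mul_cancel₀ _ (ne_of_gt ht), hm0, mul_zero,
      add_zero] at this
    rw [div_le_div_iff₀ hs ht]
    calc m (s • w) * t ≤ (s / t * m (t • w)) * t := by nlinarith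
      _ = m (t • w) * s := by field_simp
  have hNhom : ∀ c : ℝ, 0 < c → ∀ w : X, N (c • w) = c * N w := by
    intro c hc w
    have hsub1 : ∀ r ∈ B w, c * r ∈ B (c • w) := by
      rintro r ⟨t, ht, rfl⟩
      refine ⟨t / c, div_pos ht hc, ?_⟩
      rw [smul_smul, div_mul_cancel₀ _ (ne_of_gt hc)]
      field_simp
    have hsub2 : ∀ r ∈ B (c • w), ∃ e ∈ B w, r = c * e := by
      rintro r ⟨s, hs, rfl⟩
      refine ⟨m ((s * c) • w) / (s * c), ⟨s * c, mul_pos hs hc, rfl⟩, ?_⟩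
      rw [smul_smul] at *
      field_simp
    refine le_antisymm ?_ ?_
    · have : ∀ r ∈ B w, N (c • w) / c ≤ r := by
        intro r hr
        rw [div_le_iff₀ hc, mul_comm]
        exact csInf_le (hBbdd' _) (hsub1 r hr)
      have := le_csInf (hBne w) this
      calc N (c • w) = c * (N (c • w) / c) := by field_simp
        _ ≤ c * N w := by nlinarith
    · refine le_csInf (hBne (c • w)) ?_
      intro r hr
      obtain ⟨e, he, rfl⟩ := hsub2 r hr
      have := csInf_le (hBbdd' w) he
      nlinarith
  have hNadd : ∀ w1 w2 : X, N (w1 + w2) ≤ N w1 + N w2 := by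
    intro w1 w2
    refine le_of_forall_pos_le_add fun ε hε => ?_
    obtain ⟨r1, ⟨t1, ht1, rfl⟩, hr1⟩ :=
      exists_lt_of_csInf_lt (hBne w1) (lt_add_of_pos_right (N w1) (by positivity : (0:ℝ) < ε/2))
    obtain ⟨r2, ⟨t2, ht2, rfl⟩, hr2⟩ :=
      exists_lt_of_csInf_lt (hBne w2) (lt_add_of_pos_right (N w2) (by positivity : (0:ℝ) < ε/2))
    set t0 : ℝ := min t1 t2 with ht0def
    have ht0 : 0 < t0 := lt_min ht1 ht2
    have hs : 0 < t0 / 2 := by positivity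
    have hkey : m ((t0 / 2) • (w1 + w2)) ≤ (1/2) * m (t0 • w1) + (1/2) * m (t0 • w2) := by
      have := hmconv (t0 • w1) (t0 • w2) (1/2) (by norm_num) (by norm_num)
      have heq : (1/2 : ℝ) • (t0 • w1) + (1 - 1/2 : ℝ) • (t0 • w2) = (t0 / 2) • (w1 + w2) := by
        module
      rw [heq] at this
      convert this using 2 <;> norm_num
    have step1 : N (w1 + w2) ≤ m ((t0 / 2) • (w1 + w2)) / (t0 / 2) := hN_mem _ _ hs
    have step2 : m ((t0 / 2) • (w1 + w2)) / (t0 / 2) ≤ m (t0 • w1) / t0 + m (t0 • w2) / t0 := by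
      rw [div_le_iff₀ hs]
      calc m ((t0 / 2) • (w1 + w2)) ≤ (1/2) * m (t0 • w1) + (1/2) * m (t0 • w2) := hkey
        _ = (m (t0 • w1) / t0 + m (t0 • w2) / t0) * (t0 / 2) := by field_simp
    have step3 : m (t0 • w1) / t0 ≤ m (t1 • w1) / t1 := hmono w1 t0 t1 ht0 (min_le_left _ _)
    have step4 : m (t0 • w2) / t0 ≤ m (t2 • w2) / t2 := hmono w2 t0 t2 ht0 (min_le_right _ _)
    linarith
  have hN0 : N 0 = 0 := by
    refine le_antisymm (by simpa [hm0] using hN_mem 0 1 one_pos) ?_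
    refine le_csInf (hBne 0) ?_
    rintro r ⟨t, ht, rfl⟩
    rw [smul_zero, hm0, zero_div]
  obtain ⟨g, -, hg⟩ := exists_extension_of_le_sublinear ⟨⊥, 0⟩ N hNhom hNadd (by
    rintro ⟨x, hx⟩
    have hx0 : x = 0 := by simpa using hx
    simp [hx0, hN0])
  have hgb : ∀ w, |g w| ≤ σ * ‖w‖ := by
    intro w
    rw [abs_le]
    constructor
    · have := le_trans (hg (-w)) (le_trans (hN_le_m _) (hm_ub _))
      rw [map_neg, norm_neg] at this
      linarith
    · exact le_trans (hg w) (le_trans (hN_le_m _) (hm_ub _))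
  set G := g.mkContinuous σ (fun w => by rw [Real.norm_eq_abs]; exact hgb w) with hGdef
  refine ⟨G, g.mkContinuous_norm_le hσ.le _, ?_⟩
  intro w
  rcases eq_or_ne (h w) ⊤ with hw | hw
  · rw [hw]; exact le_top
  have h2 : G w ≤ (h w).toReal := by
    have h3 := le_trans (hg w) (le_trans (hN_le_m w) (hm_le w w hw))
    have h4 : G w = g w := rfl
    rw [h4]
    simpa using h3
  calc ((G w : ℝ) : EReal) ≤ (((h w).toReal : ℝ) : EReal) := EReal.coe_le_coe_iff.2 h2
    _ = h w := EReal.coe_toReal hw (hbot w)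

lemma ereal_combo {a' A B : EReal} {c' t : ℝ} (hA : 0 ≤ A) (hB : 0 ≤ B)
    (ht0 : 0 < t) (ht1 : t < 1)
    (h1 : a' ≤ (t : EReal) * A + ((1 - t : ℝ) : EReal) * B) :
    a' + ((-c' : ℝ) : EReal) ≤ (t : EReal) * (A + ((-c' : ℝ) : EReal)) +
      ((1 - t : ℝ) : EReal) * (B + ((-c' : ℝ) : EReal)) := by
  have h1t : (0:ℝ) < 1 - t := by linarith
  have htermB : ((((1 - t) * (-c')) : ℝ) : EReal) ≤
      ((1 - t : ℝ) : EReal) * (B + ((-c' : ℝ) : EReal)) := by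
    calc (((1 - t) * (-c') : ℝ) : EReal) = ((1 - t : ℝ) : EReal) * ((-c' : ℝ) : EReal) := by
          norm_cast
      _ ≤ _ := mul_le_mul_of_nonneg_left
          (by simpa using add_le_add_left hB ((-c' : ℝ) : EReal))
          (by exact_mod_cast h1t.le)
  have htermA : (((t * (-c')) : ℝ) : EReal) ≤ (t : EReal) * (A + ((-c' : ℝ) : EReal)) := by
    calc ((t * (-c') : ℝ) : EReal) = (t : EReal) * ((-c' : ℝ) : EReal) := by norm_cast
      _ ≤ _ := mul_le_mul_of_nonneg_left
          (by simpa using add_le_add_left hA ((-c' : ℝ) : EReal))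
          (by exact_mod_cast ht0.le)
  have hneB : ((1 - t : ℝ) : EReal) * (B + ((-c' : ℝ) : EReal)) ≠ ⊥ := fun hb => by
    rw [hb] at htermB; exact EReal.coe_ne_bot _ (le_bot_iff.1 htermB)
  have hneA : (t : EReal) * (A + ((-c' : ℝ) : EReal)) ≠ ⊥ := fun hb => by
    rw [hb] at htermA; exact EReal.coe_ne_bot _ (le_bot_iff.1 htermA)
  rcases eq_or_ne A ⊤ with hAt | hAt
  · rw [hAt, EReal.top_add_of_ne_bot (EReal.coe_ne_bot _),
      EReal.mul_top_of_pos (by exact_mod_cast ht0 : (0 : EReal) < (t : EReal)),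
      EReal.top_add_of_ne_bot hneB]
    exact le_top
  rcases eq_or_ne B ⊤ with hBt | hBt
  · rw [hBt, EReal.top_add_of_ne_bot (EReal.coe_ne_bot _),
      EReal.mul_top_of_pos (by exact_mod_cast h1t : (0 : EReal) < ((1 - t : ℝ) : EReal)),
      EReal.add_top_of_ne_bot hneA]
    exact le_top
  have hAb : A ≠ ⊥ := fun hb => absurd (hb ▸ hA) (by simp)
  have hBb : B ≠ ⊥ := fun hb => absurd (hb ▸ hB) (by simp)
  have hAc : A = ((A.toReal : ℝ) : EReal) := (EReal.coe_toReal hAt hAb).symm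
  have hBc : B = ((B.toReal : ℝ) : EReal) := (EReal.coe_toReal hBt hBb).symm
  rcases eq_or_ne a' ⊥ with rfl | ha'b
  · rw [EReal.bot_add]; exact bot_le
  have h1' : a' ≤ ((t * A.toReal + (1 - t) * B.toReal : ℝ) : EReal) := by
    rw [hAc, hBc] at h1
    refine le_trans h1 (le_of_eq ?_)
    norm_cast
  have ha't : a' ≠ ⊤ := fun h => by
    rw [h] at h1'; exact absurd (top_le_iff.1 h1') (EReal.coe_ne_top _)
  have ha'c : a' = ((a'.toReal : ℝ) : EReal) := (EReal.coe_toReal ha't ha'b).symm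
  have h1r : a'.toReal ≤ t * A.toReal + (1 - t) * B.toReal := by
    rw [ha'c] at h1'; exact_mod_cast h1'
  rw [ha'c, hAc, hBc]
  norm_cast
  nlinarith


/-- Error bound for convex functions: for a proper closed convex function `f` on
a Banach space with `S = [f ≤ 0] ≠ ∅`,
`K_f⁻¹ = inf {d(0, ∂f x) : x ∉ S}`. -/
theorem convex_error_bound {X : Type*} [NormedAddCommGroup X] [NormedSpace ℝ X]
    [CompleteSpace X] (f : X → EReal)
    (hbot : ∀ x, f x ≠ ⊥) (hproper : ∃ x, f x ≠ ⊤)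
    (hlsc : LowerSemicontinuous f)
    (hconv : ∀ x y : X, ∀ t : ℝ, 0 ≤ t → t ≤ 1 →
      f (t • x + (1 - t) • y) ≤ (t : EReal) * f x + ((1 - t : ℝ) : EReal) * f y)
    (hS : {x : X | f x ≤ 0}.Nonempty) :
    (errK f)⁻¹ = ⨅ x ∈ {x : X | ¬ f x ≤ 0}, ⨅ g ∈ convexSubdiff f x, (‖g‖₊ : ℝ≥0∞) := by
  classical
  set S := {u : X | f u ≤ 0} with hSdef
  set r := ⨅ x ∈ {x : X | ¬ f x ≤ 0}, ⨅ g ∈ convexSubdiff f x, (‖g‖₊ : ℝ≥0∞) with hrdef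
  set F : X → ℝ≥0∞ := fun y => erealPos (f y) with hFdef
  have hFcoe : ∀ y, ((F y : ℝ≥0∞) : EReal) = max (f y) 0 := fun y => erealPos_coe _ (hbot y)
  have hFlsc : LowerSemicontinuous F := erealPos_lsc hbot hlsc
  have hFconv : ∀ y1 y2 : X, ∀ t : ℝ, 0 ≤ t → t ≤ 1 →
      ((F (t • y1 + (1 - t) • y2) : ℝ≥0∞) : EReal) ≤
        (t : EReal) * ((F y1 : ℝ≥0∞) : EReal) + ((1 - t : ℝ) : EReal) * ((F y2 : ℝ≥0∞) : EReal) := by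
    intro y1 y2 t ht0 ht1
    rw [hFcoe, hFcoe, hFcoe]
    have hnn : (0 : EReal) ≤ (t : EReal) * max (f y1) 0 + ((1 - t : ℝ) : EReal) * max (f y2) 0 := by
      have h1 : (0 : EReal) ≤ (t : EReal) * max (f y1) 0 :=
        mul_nonneg (by exact_mod_cast ht0) (le_max_right _ _)
      have h2 : (0 : EReal) ≤ ((1 - t : ℝ) : EReal) * max (f y2) 0 :=
        mul_nonneg (by exact_mod_cast (by linarith : (0:ℝ) ≤ 1 - t)) (le_max_right _ _)
      exact add_nonneg h1 h2
    refine max_le ?_ hnn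
    refine le_trans (hconv y1 y2 t ht0 ht1) ?_
    refine add_le_add ?_ ?_
    · exact mul_le_mul_of_nonneg_left (le_max_left _ _) (by exact_mod_cast ht0)
    · exact mul_le_mul_of_nonneg_left (le_max_left _ _)
        (by exact_mod_cast (by linarith : (0:ℝ) ≤ 1 - t))
  refine le_antisymm ?_ ?_
  · -- errK⁻¹ ≤ r
    refine le_iInf₂ fun x hx => le_iInf₂ fun g hg => ?_
    suffices hKg : (‖g‖₊ : ℝ≥0∞)⁻¹ ≤ errK f by
      calc (errK f)⁻¹ ≤ ((‖g‖₊ : ℝ≥0∞)⁻¹)⁻¹ := ENNReal.inv_le_inv.2 hKg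
        _ = (‖g‖₊ : ℝ≥0∞) := inv_inv _
    refine le_sInf fun K hK => ?_
    obtain ⟨y0, hy0⟩ := hS
    have hfx0 : ¬ f x ≤ 0 := hx
    have hfxt : f x ≠ ⊤ := by
      intro ht
      have h1 := hg y0
      rw [ht, EReal.add_top_of_ne_bot (EReal.coe_ne_bot _)] at h1
      exact absurd (top_le_iff.1 (le_trans h1 hy0)).symm (by simp)
    set c : ℝ := (f x).toReal with hcdef
    have hfxc : f x = ((c : ℝ) : EReal) := (EReal.coe_toReal hfxt (hbot x)).symm
    have hc0 : 0 < c := by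
      have h2 := not_le.1 hfx0
      rw [hfxc] at h2
      exact_mod_cast h2
    have hkey : ∀ y ∈ S, c ≤ ‖g‖ * ‖x - y‖ := by
      intro y hy
      have h1 := le_trans (hg y) hy
      rw [hfxc] at h1
      have h1' : g (y - x) + c ≤ 0 := by exact_mod_cast h1
      have h3 : c ≤ g (x - y) := by
        have h4 : g (x - y) = - g (y - x) := by rw [← map_neg]; congr 1; abel
        rw [h4]; linarith
      calc c ≤ g (x - y) := h3
        _ ≤ ‖g (x - y)‖ := le_abs_self _
        _ ≤ ‖g‖ * ‖x - y‖ := g.le_opNorm _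
    have hgn0 : ‖g‖ ≠ 0 := by
      intro h0
      have h5 := hkey y0 hy0
      rw [h0, zero_mul] at h5
      linarith
    have hgE0 : (‖g‖₊ : ℝ≥0∞) ≠ 0 := by
      simp only [ne_eq, ENNReal.coe_eq_zero, nnnorm_eq_zero]
      intro h0; exact hgn0 (by rw [h0]; simp)
    have hgEt : (‖g‖₊ : ℝ≥0∞) ≠ ⊤ := ENNReal.coe_ne_top
    have hkeyE : ∀ y ∈ S, ENNReal.ofReal c ≤ (‖g‖₊ : ℝ≥0∞) * edist x y := by
      intro y hy
      calc ENNReal.ofReal c ≤ ENNReal.ofReal (‖g‖ * ‖x - y‖) :=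
            ENNReal.ofReal_le_ofReal (hkey y hy)
        _ = ENNReal.ofReal ‖g‖ * ENNReal.ofReal ‖x - y‖ :=
            ENNReal.ofReal_mul (norm_nonneg g)
        _ = (‖g‖₊ : ℝ≥0∞) * edist x y := by
            rw [ofReal_norm, enorm_eq_nnnorm, edist_dist, dist_eq_norm]
    have hdivle : ENNReal.ofReal c / (‖g‖₊ : ℝ≥0∞) ≤ infEdist x S := by
      refine Metric.le_infEDist.2 ?_
      intro y hy
      rw [ENNReal.div_le_iff_le_mul (Or.inl hgE0) (Or.inl hgEt), mul_comm]
      exact hkeyE y hy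
    have hinfK : infEdist x S ≤ K * ENNReal.ofReal c := by
      have h6 := hK x
      rwa [show erealPos (f x) = ENNReal.ofReal c by rw [erealPos, if_neg hfxt]] at h6
    have hchain : ENNReal.ofReal c ≤ (K * (‖g‖₊ : ℝ≥0∞)) * ENNReal.ofReal c := by
      calc ENNReal.ofReal c
          = (ENNReal.ofReal c / (‖g‖₊ : ℝ≥0∞)) * (‖g‖₊ : ℝ≥0∞) :=
            (ENNReal.div_mul_cancel hgE0 hgEt).symm
        _ ≤ infEdist x S * (‖g‖₊ : ℝ≥0∞) := mul_le_mul_left hdivle _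
        _ ≤ (K * ENNReal.ofReal c) * (‖g‖₊ : ℝ≥0∞) := mul_le_mul_left hinfK _
        _ = (K * (‖g‖₊ : ℝ≥0∞)) * ENNReal.ofReal c := by ring
    have hone : 1 ≤ K * (‖g‖₊ : ℝ≥0∞) := by
      have hc0' : ENNReal.ofReal c ≠ 0 := by
        simp [ENNReal.ofReal_eq_zero, not_le, hc0]
      exact (ENNReal.mul_le_mul_iff_left hc0' ENNReal.ofReal_ne_top).1
        (by rw [one_mul]; exact hchain)
    calc (‖g‖₊ : ℝ≥0∞)⁻¹ = 1 * (‖g‖₊ : ℝ≥0∞)⁻¹ := (one_mul _).symm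
      _ ≤ (K * (‖g‖₊ : ℝ≥0∞)) * (‖g‖₊ : ℝ≥0∞)⁻¹ := mul_le_mul_left hone _
      _ = K * ((‖g‖₊ : ℝ≥0∞) * (‖g‖₊ : ℝ≥0∞)⁻¹) := by rw [mul_assoc]
      _ = K := by rw [ENNReal.mul_inv_cancel hgE0 hgEt, mul_one]
  · -- r ≤ errK⁻¹
    by_contra hcon
    push_neg at hcon
    obtain ⟨σ', hσ'1, hσ'2⟩ := exists_between hcon
    have hσ't : σ' ≠ ⊤ := fun h => absurd (lt_of_lt_of_le (h ▸ hσ'2) le_top) (lt_irrefl _)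
    have hσ'0 : σ' ≠ 0 := fun h => absurd (lt_of_le_of_lt zero_le (h ▸ hσ'1)) (lt_irrefl _)
    have hadm : σ'⁻¹ ∈ {K : ℝ≥0∞ | ∀ x : X, infEdist x {u : X | f u ≤ 0} ≤ K * erealPos (f x)} := by
      intro x
      rcases le_or_gt (f x) 0 with hx0 | hx0
      · exact (infEdist_zero_of_mem (show x ∈ {u : X | f u ≤ 0} from hx0)).trans_le zero_le
      rcases eq_or_ne (f x) ⊤ with hxt | hxt
      · rw [erealPos, if_pos hxt, ENNReal.mul_top (ENNReal.inv_ne_zero.2 hσ't)]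
        exact le_top
      by_contra hbad
      push_neg at hbad
      set c : ℝ := (f x).toReal with hcdef
      rw [show erealPos (f x) = ENNReal.ofReal c from by rw [erealPos, if_neg hxt]] at hbad
      have hfxc : f x = ((c : ℝ) : EReal) := (EReal.coe_toReal hxt (hbot x)).symm
      have hc0 : 0 < c := by rw [hfxc] at hx0; exact_mod_cast hx0
      have hFx : F x = ENNReal.ofReal c := by rw [hFdef]; simp only; rw [erealPos, if_neg hxt]
      have hFxt : F x ≠ ⊤ := by rw [hFx]; exact ENNReal.ofReal_ne_top
      obtain ⟨δ, hδ1, hδ2⟩ := exists_between hσ'2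
      have hδt : δ ≠ ⊤ := fun h => absurd (lt_of_lt_of_le (h ▸ hδ2) le_top) (lt_irrefl _)
      have hδ0 : δ ≠ 0 := fun h => absurd (lt_of_le_of_lt zero_le (h ▸ hδ1)) (lt_irrefl _)
      have hrad : ENNReal.ofReal c / δ < infEdist x S := by
        refine lt_of_le_of_lt ?_ hbad
        calc ENNReal.ofReal c / δ ≤ ENNReal.ofReal c / σ' :=
              ENNReal.div_le_div_left hδ1.le _
          _ = σ'⁻¹ * ENNReal.ofReal c := by rw [ENNReal.div_eq_inv_mul]
      obtain ⟨z, hz1, hz2, hz3⟩ := my_ekeland F hFlsc x hFxt δ hδ0 hδt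
      have hzx : edist z x ≤ ENNReal.ofReal c / δ := by
        rw [ENNReal.le_div_iff_mul_le (Or.inl hδ0) (Or.inl hδt), mul_comm, ← hFx]
        exact hz2
      have hzS : ¬ f z ≤ 0 := by
        intro hzS'
        have h7 : infEdist x S ≤ edist z x := by
          rw [edist_comm]; exact infEdist_le_edist_of_mem hzS'
        exact absurd (lt_of_le_of_lt (le_trans h7 hzx) hrad) (lt_irrefl _)
      have hfz0 : 0 < f z := not_le.1 hzS
      have hfzt : f z ≠ ⊤ := by
        intro ht
        have h8 : F z = ⊤ := (erealPos_top_iff (f z)).2 ht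
        rw [h8] at hz1
        exact hFxt (top_le_iff.1 hz1)
      set c' : ℝ := (f z).toReal with hc'def
      have hfzc : f z = ((c' : ℝ) : EReal) := (EReal.coe_toReal hfzt (hbot z)).symm
      have hc'0 : 0 < c' := by rw [hfzc] at hfz0; exact_mod_cast hfz0
      have hFz : F z = ENNReal.ofReal c' := by rw [hFdef]; simp only; rw [erealPos, if_neg hfzt]
      set σ : ℝ := δ.toReal with hσdef
      have hσpos : 0 < σ := ENNReal.toReal_pos hδ0 hδt
      have hδσ : δ = ENNReal.ofReal σ := (ENNReal.ofReal_toReal hδt).symm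
      set h : X → EReal := fun w => ((F (z + w) : ℝ≥0∞) : EReal) + ((-c' : ℝ) : EReal)
        with hhdef
      have hFzE : ((F z : ℝ≥0∞) : EReal) = ((c' : ℝ) : EReal) := by
        rw [hFcoe, hfzc, max_eq_left (by exact_mod_cast hc'0.le : (0 : EReal) ≤ ((c' : ℝ) : EReal))]
      have hh0 : h 0 = 0 := by
        rw [hhdef]; simp only [add_zero]
        rw [hFzE]
        norm_cast
        ring
      have hmin : ∀ w, F z ≤ F (z + w) + ENNReal.ofReal (σ * ‖w‖) := by
        intro w
        have h9 := hz3 (z + w)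
        have hed : edist (z + w) z = ENNReal.ofReal ‖w‖ := by
          have hzw : z + w - z = w := by abel
          rw [edist_dist, dist_eq_norm, hzw]
        rwa [hed, hδσ, ← ENNReal.ofReal_mul hσpos.le] at h9
      have hlow : ∀ w, ((-(σ * ‖w‖) : ℝ) : EReal) ≤ h w := by
        intro w
        rcases eq_or_ne (F (z + w)) ⊤ with hft | hft
        · rw [hhdef]; simp only
          rw [hft, EReal.coe_ennreal_top, EReal.top_add_of_ne_bot (EReal.coe_ne_bot _)]
          exact le_top
        · set a : ℝ := (F (z + w)).toReal with hadef
          have haE : ((F (z + w) : ℝ≥0∞) : EReal) = ((a : ℝ) : EReal) := by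
            rw [← ENNReal.ofReal_toReal hft, ← hadef, EReal.coe_ennreal_ofReal,
              max_eq_left ENNReal.toReal_nonneg]
          have hreal : c' ≤ a + σ * ‖w‖ := by
            have h10 := hmin w
            rw [hFz, ← ENNReal.ofReal_toReal hft, ← hadef,
              ← ENNReal.ofReal_add ENNReal.toReal_nonneg (by positivity)] at h10
            exact (ENNReal.ofReal_le_ofReal_iff (by positivity)).1 h10
          rw [hhdef]; simp only
          rw [haE]
          norm_cast
          linarith
      have hhconv : ∀ w1 w2 : X, ∀ t : ℝ, 0 ≤ t → t ≤ 1 →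
          h (t • w1 + (1 - t) • w2) ≤ (t : EReal) * h w1 + ((1 - t : ℝ) : EReal) * h w2 := by
        intro w1 w2 t ht0 ht1
        rcases eq_or_lt_of_le ht0 with rfl | ht0'
        · simp only [zero_smul, zero_add, sub_zero, one_smul, EReal.coe_zero, zero_mul,
            EReal.coe_one, one_mul]
          exact le_rfl
        rcases eq_or_lt_of_le ht1 with rfl | ht1'
        · simp only [one_smul, sub_self, zero_smul, add_zero, EReal.coe_one, one_mul,
            EReal.coe_zero, zero_mul]
          exact le_rfl
        have hcomb : z + (t • w1 + (1 - t) • w2) = t • (z + w1) + (1 - t) • (z + w2) := by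
          module
        have h1 : ((F (z + (t • w1 + (1 - t) • w2)) : ℝ≥0∞) : EReal) ≤
            (t : EReal) * ((F (z + w1) : ℝ≥0∞) : EReal) +
              ((1 - t : ℝ) : EReal) * ((F (z + w2) : ℝ≥0∞) : EReal) := by
          rw [hcomb]; exact hFconv _ _ t ht0 ht1
        rw [hhdef]; simp only
        exact ereal_combo (EReal.coe_ennreal_nonneg _) (EReal.coe_ennreal_nonneg _) ht0' ht1' h1
      obtain ⟨g, hgnorm, hgle⟩ := my_sandwich h σ hσpos hh0 hlow hhconv
      have hgsub : g ∈ convexSubdiff f z := by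
        intro y
        have hy' := hgle (y - z)
        rw [hhdef] at hy'; simp only at hy'
        rw [show z + (y - z) = y by abel] at hy'
        rw [hfzc]
        rcases le_or_gt 0 (f y) with hy0 | hy0
        · rw [hFcoe, max_eq_left hy0] at hy'
          rcases eq_or_ne (f y) ⊤ with hyt | hyt
          · rw [hyt]
            exact le_top
          · have hfyc : f y = (((f y).toReal : ℝ) : EReal) := (EReal.coe_toReal hyt (hbot y)).symm
            rw [hfyc] at hy' ⊢
            norm_cast at hy' ⊢
            linarith
        · have hyt : f y ≠ ⊤ := fun ht => absurd (ht ▸ hy0) (by simp)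
          set b : ℝ := (f y).toReal with hbdef
          have hfyc : f y = ((b : ℝ) : EReal) := (EReal.coe_toReal hyt (hbot y)).symm
          have hb0 : b < 0 := by rw [hfyc] at hy0; exact_mod_cast hy0
          set t : ℝ := c' / (2 * (c' - b)) with htdef
          have hcb : 0 < c' - b := by linarith
          have ht0 : 0 < t := by positivity
          have ht1 : t ≤ 1 := by
            rw [htdef, div_le_one (by linarith)]
            linarith
          have hβ : t * b + (1 - t) * c' = c' / 2 := by
            rw [htdef]
            field_simp
            ring
          have hseg' : f (t • y + (1 - t) • z) ≤ ((c' / 2 : ℝ) : EReal) := by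
            refine le_trans (hconv y z t ht0.le ht1) ?_
            rw [hfyc, hfzc]
            rw [show ((c' / 2 : ℝ) : EReal) = ((t * b + (1 - t) * c' : ℝ) : EReal) by rw [hβ]]
            norm_cast
          have hw := hgle (t • (y - z))
          rw [hhdef] at hw; simp only at hw
          rw [show z + t • (y - z) = t • y + (1 - t) • z by module] at hw
          have hmax : ((F (t • y + (1 - t) • z) : ℝ≥0∞) : EReal) ≤ ((c' / 2 : ℝ) : EReal) := by
            rw [hFcoe]
            exact max_le hseg' (by exact_mod_cast (by positivity : (0:ℝ) ≤ c' / 2))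
          have hw2 : ((g (t • (y - z)) : ℝ) : EReal) ≤ ((c' / 2 - c' : ℝ) : EReal) := by
            refine le_trans hw ?_
            calc ((F (t • y + (1 - t) • z) : ℝ≥0∞) : EReal) + ((-c' : ℝ) : EReal)
                ≤ ((c' / 2 : ℝ) : EReal) + ((-c' : ℝ) : EReal) := add_le_add_left hmax _
              _ = ((c' / 2 - c' : ℝ) : EReal) := by norm_cast
          have hreal : t * g (y - z) ≤ c' / 2 - c' := by
            have h11 : g (t • (y - z)) = t * g (y - z) := by
              rw [map_smul, smul_eq_mul]
            rw [h11] at hw2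
            exact_mod_cast hw2
          have hgyz : g (y - z) ≤ b - c' := by
            have heq : c' / 2 - c' = t * (b - c') := by
              rw [htdef]; field_simp; ring
            rw [heq] at hreal
            nlinarith
          rw [hfyc]
          norm_cast
          linarith
      have hrle : r ≤ (‖g‖₊ : ℝ≥0∞) :=
        le_trans (iInf₂_le z hzS) (iInf₂_le g hgsub)
      have hgδ : (‖g‖₊ : ℝ≥0∞) ≤ δ := by
        rw [hδσ, ← enorm_eq_nnnorm, ← ofReal_norm]
        exact ENNReal.ofReal_le_ofReal hgnorm
      exact absurd (lt_of_le_of_lt (le_trans hrle hgδ) hδ2) (lt_irrefl _)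
    have herrK : errK f ≤ σ'⁻¹ := csInf_le (OrderBot.bddBelow _) hadm
    have hfin : σ' ≤ (errK f)⁻¹ := by
      rw [← inv_inv σ']
      exact ENNReal.inv_le_inv.2 herrK
    exact absurd (lt_of_le_of_lt hfin hσ'1) (lt_irrefl _)
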